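/- Let w = (w₁,…,w_p) ∈ (ℤ/p)^p, let A = (ℤ/p)^p, let Γ = A ⋊ C_p (with C_p acting by cyclic coordinate permutation), and let ρ_w be the representation of Γ induced from the linear character a ↦ exp(2πi⟨w,a⟩/p) of A. Then ρ_w is irreducible and faithful if and only if ∑ᵢ wᵢ ≠ 0 in ℤ/p. -/

import Mathlib

/-- The shift-by-`k` automorphism of `(ℤ/p)^p` (coordinates indexed by `ℤ/p`),
the action of `σ^k` where `σ` is the cycle `(1 2 … p)`. -/
def shiftAut (p : ℕ) (k : ZMod p) : (ZMod p → ZMod p) ≃+ (ZMod p → ZMod p) where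
  toFun a := fun i => a (i + k)
  invFun a := fun i => a (i - k)
  left_inv a := by funext i; simp
  right_inv a := by funext i; simp
  map_add' a b := rfl

/-- The action of the cyclic group `C_p` on `A = (ℤ/p)^p` by cyclic coordinate
permutations, written multiplicatively. -/
def cycPerm (p : ℕ) :
    Multiplicative (ZMod p) →* MulAut (Multiplicative (ZMod p → ZMod p)) where
  toFun k := AddEquiv.toMultiplicative (shiftAut p k.toAdd)
  map_one' := by
    ext x : 1
    show Multiplicative.ofAdd (fun i => x.toAdd (i + (0 : ZMod p))) = x
    simp
  map_mul' k l := by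
    ext x : 1
    show Multiplicative.ofAdd (fun i => x.toAdd (i + (k.toAdd + l.toAdd)))
      = Multiplicative.ofAdd (fun i => x.toAdd (i + k.toAdd + l.toAdd))
    congr 1
    funext i
    rw [add_assoc]

/-- The linear character `a ↦ exp(2πi⟨w,a⟩/p)` of `A = (ℤ/p)^p`. -/
noncomputable def chiW (p : ℕ) [NeZero p] (w a : ZMod p → ZMod p) : ℂ :=
  Complex.exp (2 * Real.pi * Complex.I * (((∑ i, w i * a i).val : ℕ) : ℂ) / p)

lemma chiW_key (p : ℕ) [NeZero p] (u v : ZMod p) :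
    Complex.exp (2 * Real.pi * Complex.I * (((u + v).val : ℕ) : ℂ) / p)
      = Complex.exp (2 * Real.pi * Complex.I * ((u.val : ℕ) : ℂ) / p) *
        Complex.exp (2 * Real.pi * Complex.I * ((v.val : ℕ) : ℂ) / p) := by
  have hp : (p : ℂ) ≠ 0 := Nat.cast_ne_zero.mpr (NeZero.ne p)
  have hmod : (((u + v).val : ℕ) : ℂ) + p * (((u.val + v.val) / p : ℕ) : ℂ)
      = ((u.val : ℕ) : ℂ) + ((v.val : ℕ) : ℂ) := by
    have h2 : ((u + v).val + p * ((u.val + v.val) / p) : ℕ) = u.val + v.val := by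
      rw [ZMod.val_add]; exact Nat.mod_add_div _ _
    exact_mod_cast congrArg (fun n : ℕ => (n : ℂ)) h2
  rw [← Complex.exp_add, Complex.exp_eq_exp_iff_exists_int]
  refine ⟨-(((u.val + v.val) / p : ℕ) : ℤ), ?_⟩
  have hq' : (((u + v).val : ℕ) : ℂ)
      = ((u.val : ℕ) : ℂ) + ((v.val : ℕ) : ℂ) - p * (((u.val + v.val) / p : ℕ) : ℂ) := by
    linear_combination hmod
  rw [hq', Int.cast_neg, Int.cast_natCast]
  field_simp
  ring

lemma chiW_add (p : ℕ) [NeZero p] (w a b : ZMod p → ZMod p) :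
    chiW p w (a + b) = chiW p w a * chiW p w b := by
  unfold chiW
  have hsum : ∑ i, w i * (a + b) i = (∑ i, w i * a i) + (∑ i, w i * b i) := by
    simp [mul_add, Finset.sum_add_distrib]
  rw [hsum]
  exact chiW_key p _ _

/-- The representation of `Γ = A ⋊ C_p` induced from the linear character
`a ↦ exp(2πi⟨w,a⟩/p)` of `A`, written down explicitly in the basis indexed by
the coset representatives `σ^j` of `A` in `Γ`. -/
noncomputable def rhoW (p : ℕ) [NeZero p] (w : ZMod p → ZMod p) :
    (Multiplicative (ZMod p → ZMod p) ⋊[cycPerm p] Multiplicative (ZMod p)) →*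
      Matrix (ZMod p) (ZMod p) ℂ where
  toFun x := Matrix.of fun j i =>
    if i = j + Multiplicative.toAdd x.right
    then chiW p w (fun i' => Multiplicative.toAdd x.left (i' + j)) else 0
  map_one' := by
    ext j i
    by_cases h : i = j
    · subst h
      simp [Matrix.one_apply, chiW]
    · simp [Matrix.one_apply, h, Ne.symm h, chiW]
  map_mul' x y := by
    ext j i
    rw [Matrix.mul_apply]
    simp only [Matrix.of_apply, SemidirectProduct.mul_right, SemidirectProduct.mul_left,
      toAdd_mul]
    rw [Finset.sum_eq_single (j + Multiplicative.toAdd x.right)]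
    · rw [if_pos rfl]
      by_cases h : i = j + Multiplicative.toAdd x.right + Multiplicative.toAdd y.right
      · rw [if_pos (by rw [h, add_assoc]), if_pos h]
        have hleft : (fun i' => (Multiplicative.toAdd x.left
              + Multiplicative.toAdd ((cycPerm p) x.right y.left)) (i' + j))
            = (fun i' => Multiplicative.toAdd x.left (i' + j))
              + (fun i' => Multiplicative.toAdd y.left
                  (i' + (j + Multiplicative.toAdd x.right))) := by
          funext i'
          show Multiplicative.toAdd x.left (i' + j)
              + Multiplicative.toAdd y.left (i' + j + Multiplicative.toAdd x.right) = _
          simp only [Pi.add_apply]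
          rw [add_assoc]
        rw [hleft, chiW_add]
      · rw [if_neg (fun hc => h (hc.trans (add_assoc j _ _).symm)), if_neg h, mul_zero]
    · intro k _ hk
      rw [if_neg hk, zero_mul]
    · intro hmem
      exact absurd (Finset.mem_univ _) hmem

/-- Irreducibility of a matrix-valued representation: the only invariant
subspaces are trivial. -/
def IsIrredMat {G : Type*} [Group G] {p : ℕ} [NeZero p]
    (ρ : G →* Matrix (ZMod p) (ZMod p) ℂ) : Prop :=
  ∀ W : Submodule ℂ (ZMod p → ℂ),
    (∀ g : G, ∀ v ∈ W, (ρ g).mulVec v ∈ W) → W = ⊥ ∨ W = ⊤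


open AddMonoidAlgebra in
noncomputable def UU (p : ℕ) [NeZero p] (c : ZMod p → ZMod p) : AddMonoidAlgebra (ZMod p) (ZMod p) :=
  ∑ i, AddMonoidAlgebra.single i (c i)

lemma charP_RR (p : ℕ) : CharP (AddMonoidAlgebra (ZMod p) (ZMod p)) p :=
  charP_of_injective_ringHom (f := AddMonoidAlgebra.singleZeroRingHom)
    (AddMonoidAlgebra.single_right_injective (R := ZMod p) (M := ZMod p) (m := 0)) p

lemma UU_apply (p : ℕ) [NeZero p] (c : ZMod p → ZMod p) (k : ZMod p) :
    (UU p c).coeff k = c k := by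
  unfold UU
  rw [AddMonoidAlgebra.coeff_sum, Finsupp.finset_sum_apply]
  rw [Finset.sum_eq_single k]
  · simp
  · intro b _ hb; simp [Finsupp.single_apply, hb]
  · simp

lemma UU_mul_apply (p : ℕ) [NeZero p] (u c : ZMod p → ZMod p) (k : ZMod p) :
    (UU p u * UU p c).coeff k = ∑ i, u i * c (k - i) := by
  unfold UU
  rw [Finset.sum_mul_sum]
  simp_rw [AddMonoidAlgebra.single_mul_single]
  rw [AddMonoidAlgebra.coeff_sum, Finsupp.finset_sum_apply]
  refine Finset.sum_congr rfl fun i _ => ?_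
  rw [AddMonoidAlgebra.coeff_sum, Finsupp.finset_sum_apply, Finset.sum_eq_single (k - i)]
  · simp [AddMonoidAlgebra.single, Finsupp.single_apply]
  · intro b _ hb
    rw [AddMonoidAlgebra.coeff_single_apply, if_neg]
    intro h; exact hb (by linear_combination h)
  · simp

lemma UU_isUnit (p : ℕ) [NeZero p] [Fact p.Prime] (u : ZMod p → ZMod p)
    (hu : ∑ i, u i ≠ 0) : IsUnit (UU p u) := by
  haveI := charP_RR p
  set R := AddMonoidAlgebra (ZMod p) (ZMod p)
  set X : R := AddMonoidAlgebra.single 1 1 with hX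
  set s : R := AddMonoidAlgebra.single 0 (∑ i, u i) with hs
  have hXpow : ∀ k : ℕ, X ^ k = AddMonoidAlgebra.single ((k : ZMod p)) 1 := by
    intro k
    rw [hX, AddMonoidAlgebra.single_pow, one_pow, nsmul_eq_mul, mul_one]
  have hXp : X ^ p = 1 := by
    rw [hXpow, ZMod.natCast_self]
    rfl
  have hn : UU p u - s = (∑ i, AddMonoidAlgebra.single 0 (u i)
      * (∑ m ∈ Finset.range i.val, X ^ m)) * (X - 1) := by
    rw [Finset.sum_mul]
    have hs' : s = ∑ i : ZMod p, AddMonoidAlgebra.single 0 (u i) := by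
      rw [hs]
      exact map_sum (AddMonoidAlgebra.singleAddHom 0) u Finset.univ
    rw [hs', UU, ← Finset.sum_sub_distrib]
    refine Finset.sum_congr rfl fun i _ => ?_
    rw [mul_assoc, geom_sum_mul, hXpow, mul_sub, AddMonoidAlgebra.single_mul_single,
      zero_add, mul_one, ZMod.natCast_rightInverse i, mul_one]
  have hnil : IsNilpotent (UU p u - s) := by
    refine ⟨p, ?_⟩
    rw [hn, mul_pow, sub_pow_char, hXp, one_pow, sub_self, mul_zero]
  have hsu : IsUnit s := by
    rw [hs]
    exact (isUnit_iff_ne_zero.mpr hu).map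
      (AddMonoidAlgebra.singleZeroRingHom (R := ZMod p) (M := ZMod p))
  have := hnil.isUnit_add_left_of_commute hsu (Commute.all _ _)
  simpa using this

lemma vanish (p : ℕ) [NeZero p] [Fact p.Prime] (w : ZMod p → ZMod p)
    (hw : ∑ i, w i ≠ 0) (c : ZMod p → ZMod p)
    (h : ∀ j, ∑ i, w i * c (i + j) = 0) : c = 0 := by
  have hU := UU_isUnit p w hw
  have hzero : UU p w * UU p (fun m => c (-m)) = 0 := by
    ext k
    rw [UU_mul_apply]
    simpa [← sub_eq_add_neg] using h (-k)
  have hC : UU p (fun m => c (-m)) = 0 := hU.mul_left_cancel (by rw [hzero, mul_zero])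
  funext x
  have h2 : (UU p (fun m => c (-m))).coeff (-x) = (0 : AddMonoidAlgebra (ZMod p) (ZMod p)).coeff (-x) := by
    rw [hC]
  rw [UU_apply] at h2
  simpa using h2

lemma pairing_surj (p : ℕ) [NeZero p] [Fact p.Prime] (w : ZMod p → ZMod p)
    (hw : ∑ i, w i ≠ 0) (t : ZMod p → ZMod p) :
    ∃ a : ZMod p → ZMod p, ∀ j, ∑ i, w i * a (i + j) = t j := by
  set L : (ZMod p → ZMod p) → (ZMod p → ZMod p) := fun a j => ∑ i, w i * a (i + j) with hL
  have hinj : Function.Injective L := by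
    intro a b hab
    have : a - b = 0 := by
      refine vanish p w hw (a - b) fun j => ?_
      have h1 : ∑ i, w i * (a - b) (i + j) = L a j - L b j := by
        simp [hL, mul_sub, Finset.sum_sub_distrib]
      rw [h1, hab, sub_self]
    exact sub_eq_zero.mp this
  have hsurj : Function.Surjective L := Finite.surjective_of_injective hinj
  obtain ⟨a, ha⟩ := hsurj t
  exact ⟨a, fun j => congrFun ha j⟩

lemma exp_val_eq_one_iff (p : ℕ) [NeZero p] (v : ZMod p) :
    Complex.exp (2 * Real.pi * Complex.I * ((v.val : ℕ) : ℂ) / p) = 1 ↔ v = 0 := by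
  constructor
  · intro h
    rw [Complex.exp_eq_one_iff] at h
    obtain ⟨n, hn⟩ := h
    have hp : (p : ℂ) ≠ 0 := Nat.cast_ne_zero.mpr (NeZero.ne p)
    have hpi : (2 * Real.pi * Complex.I : ℂ) ≠ 0 := by
      simp [Real.pi_ne_zero, Complex.I_ne_zero]
    have hval : ((v.val : ℕ) : ℂ) = n * p := by
      have h3 : 2 * Real.pi * Complex.I * ((v.val : ℕ) : ℂ)
          = n * (2 * Real.pi * Complex.I) * p := (div_eq_iff hp).mp hn
      exact mul_left_cancel₀ hpi (by linear_combination h3)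
    have hz : (v.val : ℤ) = n * p := by exact_mod_cast hval
    have hlt : (v.val : ℤ) < p := by exact_mod_cast v.val_lt
    have hge : (0 : ℤ) ≤ (v.val : ℤ) := Int.natCast_nonneg _
    have hppos : (0 : ℤ) < p := by exact_mod_cast Nat.pos_of_ne_zero (NeZero.ne p)
    have hn0 : n = 0 := by
      rcases lt_trichotomy n 0 with h | h | h
      · nlinarith
      · exact h
      · nlinarith
    rw [hn0, zero_mul] at hz
    have : v.val = 0 := by exact_mod_cast hz
    exact (ZMod.val_eq_zero v).mp this
  · intro h
    subst h
    simp [ZMod.val_zero]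

lemma e_inj (p : ℕ) [NeZero p] :
    Function.Injective (fun j : ZMod p =>
      Complex.exp (2 * Real.pi * Complex.I * ((j.val : ℕ) : ℂ) / p)) := by
  intro a b hab
  simp only at hab
  have h1 : Complex.exp (2 * Real.pi * Complex.I * (((a - b).val : ℕ) : ℂ) / p)
      = 1 := by
    have hkey := chiW_key p (a - b) b
    simp only [sub_add_cancel] at hkey
    have h3 : Complex.exp (2 * Real.pi * Complex.I * (((a - b).val : ℕ) : ℂ) / p)
        * Complex.exp (2 * Real.pi * Complex.I * ((b.val : ℕ) : ℂ) / p)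
        = 1 * Complex.exp (2 * Real.pi * Complex.I * ((b.val : ℕ) : ℂ) / p) := by
      rw [one_mul, ← hkey, hab]
    exact mul_right_cancel₀ (Complex.exp_ne_zero _) h3
  have := (exp_val_eq_one_iff p (a - b)).mp h1
  exact sub_eq_zero.mp this

lemma rhoW_mulVec (p : ℕ) [NeZero p] (w : ZMod p → ZMod p)
    (x : Multiplicative (ZMod p → ZMod p) ⋊[cycPerm p] Multiplicative (ZMod p))
    (v : ZMod p → ℂ) (j : ZMod p) :
    (rhoW p w x).mulVec v j
      = chiW p w (fun i' => Multiplicative.toAdd x.left (i' + j))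
        * v (j + Multiplicative.toAdd x.right) := by
  unfold Matrix.mulVec dotProduct
  rw [Finset.sum_eq_single (j + Multiplicative.toAdd x.right)]
  · simp [rhoW]
  · intro b _ hb
    simp only [rhoW, MonoidHom.coe_mk, OneHom.coe_mk, Matrix.of_apply, if_neg hb, zero_mul]
  · simp

lemma rhoW_entry (p : ℕ) [NeZero p] (w : ZMod p → ZMod p)
    (x : Multiplicative (ZMod p → ZMod p) ⋊[cycPerm p] Multiplicative (ZMod p))
    (j i : ZMod p) :
    rhoW p w x j i = if i = j + Multiplicative.toAdd x.right
      then chiW p w (fun i' => Multiplicative.toAdd x.left (i' + j)) else 0 := rfl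

theorem stmt13 (p : ℕ) [NeZero p] [Fact p.Prime] (hp2 : p ≠ 2) (w : ZMod p → ZMod p) :
    (Function.Injective (rhoW p w) ∧ IsIrredMat (rhoW p w)) ↔ (∑ i, w i) ≠ 0 := by
  have hp : p.Prime := Fact.out
  haveI : Fact (1 < p) := ⟨hp.one_lt⟩
  constructor
  · rintro ⟨hinj, -⟩ hsum
    have hchi1 : chiW p w (fun _ => (1 : ZMod p)) = 1 := by
      unfold chiW
      rw [show (∑ i, w i * (fun _ => (1:ZMod p)) i) = 0 from by simpa using hsum]
      simp
    have hg : rhoW p w ⟨Multiplicative.ofAdd (fun _ => (1 : ZMod p)), 1⟩ = rhoW p w 1 := by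
      rw [map_one]
      ext j i
      rw [rhoW_entry]
      by_cases h : i = j
      · subst h
        rw [if_pos (by simp), Matrix.one_apply_eq]
        exact hchi1
      · rw [if_neg (by simpa using h), Matrix.one_apply_ne (Ne.symm h)]
    have h1 := hinj hg
    have h2 : Multiplicative.ofAdd (fun _ => (1 : ZMod p))
        = (1 : Multiplicative (ZMod p → ZMod p)) := congrArg SemidirectProduct.left h1
    have h3 : (fun _ => (1 : ZMod p)) = (fun _ => (0 : ZMod p)) := h2
    exact one_ne_zero (congrFun h3 0)
  · intro hsum
    have hker : ∀ g, rhoW p w g = 1 → g = 1 := by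
      intro g hg
      have hk : Multiplicative.toAdd g.right = 0 := by
        by_contra hk
        have h0 : rhoW p w g 0 (0 + Multiplicative.toAdd g.right)
            = (1 : Matrix (ZMod p) (ZMod p) ℂ) 0 (0 + Multiplicative.toAdd g.right) := by
          rw [hg]
        rw [rhoW_entry, if_pos rfl, Matrix.one_apply,
          if_neg (by simpa using fun h => hk h.symm)] at h0
        exact Complex.exp_ne_zero _ h0
      have ha : Multiplicative.toAdd g.left = 0 := by
        refine vanish p w hsum _ fun j => ?_
        have h0 : rhoW p w g j j = (1 : Matrix (ZMod p) (ZMod p) ℂ) j j := by rw [hg]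
        rw [rhoW_entry, if_pos (by rw [hk, add_zero]), Matrix.one_apply_eq] at h0
        unfold chiW at h0
        simpa using (exp_val_eq_one_iff p _).mp h0
      refine SemidirectProduct.ext ?_ ?_
      · exact ha
      · exact hk
    constructor
    · intro x y hxy
      have h1 : rhoW p w (x * y⁻¹) = 1 := by
        rw [map_mul, hxy, ← map_mul, mul_inv_cancel, map_one]
      exact mul_inv_eq_one.mp (hker _ h1)
    · intro W hW
      by_cases hbot : W = ⊥
      · exact Or.inl hbot
      right
      obtain ⟨a, ha⟩ := pairing_surj p w hsum id
      set e : ZMod p → ℂ :=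
        fun j => Complex.exp (2 * Real.pi * Complex.I * ((j.val : ℕ) : ℂ) / p) with he
      have hD : ∀ v : ZMod p → ℂ, ∀ j,
          (rhoW p w ⟨Multiplicative.ofAdd a, 1⟩).mulVec v j = e j * v j := by
        intro v j
        rw [rhoW_mulVec]
        show chiW p w (fun i' => a (i' + j))
          * v (j + Multiplicative.toAdd (1 : Multiplicative (ZMod p))) = e j * v j
        unfold chiW
        rw [show (∑ i, w i * (fun i' => a (i' + j)) i) = j from by simpa using ha j]
        simp [he]
      have hDW : ∀ v ∈ W, (fun k => e k * v k) ∈ W := by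
        intro v hv
        have h1 := hW ⟨Multiplicative.ofAdd a, 1⟩ v hv
        have h2 : (rhoW p w ⟨Multiplicative.ofAdd a, 1⟩).mulVec v
            = fun k => e k * v k := funext fun k => hD v k
        rwa [h2] at h1
      have hstep : ∀ S : Finset (ZMod p), ∀ v ∈ W,
          (fun k => (∏ j' ∈ S, (e k - e j')) * v k) ∈ W := by
        intro S
        induction S using Finset.induction_on with
        | empty => intro v hv; simpa using hv
        | @insert j' S hj' ih =>
          intro v hv
          have hu := ih v hv
          set u : ZMod p → ℂ := fun k => (∏ j'' ∈ S, (e k - e j'')) * v k with hu'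
          have h1 : (fun k => e k * u k) ∈ W := hDW u hu
          have h2 : (fun k => e k * u k - e j' * u k) ∈ W := by
            have h3 := W.sub_mem h1 (W.smul_mem (e j') hu)
            have h4 : ((fun k => e k * u k) - e j' • u)
                = fun k => e k * u k - e j' * u k := by
              funext k; simp
            rwa [h4] at h3
          have heq : (fun k => (∏ j'' ∈ insert j' S, (e k - e j'')) * v k)
              = fun k => e k * u k - e j' * u k := by
            funext k
            rw [Finset.prod_insert hj']
            show (e k - e j') * (∏ j'' ∈ S, (e k - e j'')) * v k = _
            rw [hu']
            ring
          rw [heq]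
          exact h2
      obtain ⟨v, hvW, hv0⟩ := (Submodule.ne_bot_iff W).mp hbot
      obtain ⟨j0, hj0⟩ : ∃ j0, v j0 ≠ 0 := by
        by_contra h
        push_neg at h
        exact hv0 (funext fun k => h k)
      have hP := hstep (Finset.univ.erase j0) v hvW
      set c : ℂ := ∏ j' ∈ Finset.univ.erase j0, (e j0 - e j') with hc
      have hc0 : c ≠ 0 := by
        rw [hc]
        refine Finset.prod_ne_zero_iff.mpr fun j' hj' => ?_
        have hne : j' ≠ j0 := Finset.ne_of_mem_erase hj'
        exact sub_ne_zero.mpr fun hje => hne (e_inj p hje).symm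
      have hsingle0 : Pi.single j0 (1 : ℂ) ∈ W := by
        have hsm := W.smul_mem (c * v j0)⁻¹ hP
        have heq : (c * v j0)⁻¹ •
            (fun k => (∏ j' ∈ Finset.univ.erase j0, (e k - e j')) * v k)
            = Pi.single j0 (1 : ℂ) := by
          funext k
          by_cases hk : k = j0
          · subst hk
            show (c * v k)⁻¹ * (c * v k) = _
            rw [inv_mul_cancel₀ (mul_ne_zero hc0 hj0)]
            simp [Pi.single_apply]
          · have hzero : (∏ j' ∈ Finset.univ.erase j0, (e k - e j')) = 0 :=
              Finset.prod_eq_zero (Finset.mem_erase.mpr ⟨hk, Finset.mem_univ k⟩)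
                (sub_self (e k))
            simp [Pi.single_apply, hk, hzero]
        rwa [heq] at hsm
      have hsingle : ∀ m : ZMod p, Pi.single m (1 : ℂ) ∈ W := by
        intro m
        have hS := hW ⟨1, Multiplicative.ofAdd (j0 - m)⟩ _ hsingle0
        have heq : (rhoW p w ⟨1, Multiplicative.ofAdd (j0 - m)⟩).mulVec
            (Pi.single j0 (1 : ℂ)) = Pi.single m (1 : ℂ) := by
          funext k
          rw [rhoW_mulVec]
          have hchi : chiW p w (fun i' =>
              Multiplicative.toAdd (1 : Multiplicative (ZMod p → ZMod p)) (i' + k)) = 1 := by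
            unfold chiW
            simp
          rw [hchi, one_mul]
          show (Pi.single j0 (1 : ℂ) : ZMod p → ℂ) (k + (j0 - m)) = (Pi.single m (1 : ℂ) : ZMod p → ℂ) k
          by_cases hk : k = m
          · subst hk
            rw [show k + (j0 - k) = j0 from by ring]
            simp [Pi.single_apply]
          · have hne : k + (j0 - m) ≠ j0 := by
              intro h
              exact hk (by linear_combination h)
            simp [Pi.single_apply, hk, hne]
        rwa [heq] at hS
      rw [Submodule.eq_top_iff']
      intro x
      have hx : x = ∑ m, x m • (Pi.single m (1 : ℂ) : ZMod p → ℂ) := by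
        funext k
        simp [Pi.single_apply]
      rw [hx]
      exact Submodule.sum_mem W fun m _ => W.smul_mem _ (hsingle m)
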